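/- Let α = (√5 - 1)/2 and fix 0 < r < 1. Then the sequence of sums ∑_{k=1}^{n} log|1 - r e^{2πi k α}| is bounded uniformly in n, i.e. there exists C > 0 with |∑_{k=1}^{n} log|1 - r e^{2πi k α}|| ≤ C for all n ≥ 1. -/

import Mathlib

open Real Finset

lemma golden_dio (m : ℕ) (hm : 1 ≤ m) (p : ℤ) :
    1 / (4 * m) ≤ |(m : ℝ) * ((Real.sqrt 5 - 1) / 2) - p| := by
  have h5 : Real.sqrt 5 ^ 2 = 5 := Real.sq_sqrt (by norm_num)
  have hs0 : (0:ℝ) ≤ Real.sqrt 5 := Real.sqrt_nonneg 5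
  have hs3 : Real.sqrt 5 ≤ 3 := by nlinarith
  have hm' : (1:ℝ) ≤ (m:ℝ) := by exact_mod_cast hm
  set α : ℝ := (Real.sqrt 5 - 1) / 2 with hαdef
  set β : ℝ := (-(Real.sqrt 5) - 1) / 2 with hβdef
  have hprod : ((m:ℝ) * α - p) * ((m:ℝ) * β - p) = (p:ℝ)^2 + p * m - (m:ℝ)^2 := by
    rw [hαdef, hβdef]
    linear_combination (-((m:ℝ)^2)/4) * h5
  have hN : (p^2 + p * (m:ℤ) - (m:ℤ)^2 : ℤ) ≠ 0 := by
    intro h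
    have key : ((2*p + (m:ℤ))^2 : ℤ) = 5 * (m:ℤ)^2 := by linear_combination 4 * h
    have h5i : Irrational (Real.sqrt 5) := by
      have := (by norm_num : Nat.Prime 5).irrational_sqrt
      simpa using this
    apply h5i
    refine ⟨(|2*p + (m:ℤ)| : ℤ) / (m : ℚ), ?_⟩
    have hm0 : ((m:ℝ)) ≠ 0 := by positivity
    have keyR : ((2:ℝ)*p + m)^2 = 5 * m^2 := by exact_mod_cast key
    have hkey : ((2*p + (m:ℤ) : ℤ) : ℝ)^2 = (Real.sqrt 5 * m)^2 := by
      push_cast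
      linear_combination keyR - (m:ℝ)^2 * h5
    have habs : |((2*p + (m:ℤ) : ℤ) : ℝ)| = Real.sqrt 5 * m := by
      have h1 : |((2*p + (m:ℤ) : ℤ) : ℝ)| = |Real.sqrt 5 * m| := by
        rw [← sq_abs, ← sq_abs (Real.sqrt 5 * m)] at hkey
        nlinarith [abs_nonneg ((2*p + (m:ℤ) : ℤ) : ℝ), abs_nonneg (Real.sqrt 5 * m), hkey]
      rw [h1, abs_of_nonneg (by positivity)]
    push_cast at habs ⊢
    rw [habs]
    field_simp
  have h1 : (1:ℝ) ≤ |(m:ℝ) * α - p| * |(m:ℝ) * β - p| := by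
    rw [← abs_mul, hprod]
    have h2 : (1:ℝ) ≤ |((p^2 + p * (m:ℤ) - (m:ℤ)^2 : ℤ) : ℝ)| := by
      rw [← Int.cast_abs]
      exact_mod_cast Int.one_le_abs hN
    calc (1:ℝ) ≤ |((p^2 + p * (m:ℤ) - (m:ℤ)^2 : ℤ) : ℝ)| := h2
      _ = |(p:ℝ)^2 + p * m - (m:ℝ)^2| := by push_cast; ring_nf
  by_cases hc : 1 ≤ |(m:ℝ) * α - p|
  · have : 1 / (4 * (m:ℝ)) ≤ 1 := by
      rw [div_le_one (by positivity)]; linarith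
    linarith
  · push_neg at hc
    have hβb : |(m:ℝ) * β - p| ≤ 4 * m := by
      have he : (m:ℝ) * β - p = ((m:ℝ) * α - p) + (m:ℝ) * (β - α) := by ring
      have hba : |β - α| = Real.sqrt 5 := by
        rw [hαdef, hβdef]
        rw [show (-(Real.sqrt 5) - 1) / 2 - (Real.sqrt 5 - 1) / 2 = -(Real.sqrt 5) by ring,
          abs_neg, abs_of_nonneg hs0]
      calc |(m:ℝ) * β - p| ≤ |(m:ℝ) * α - p| + |(m:ℝ) * (β - α)| := by
              rw [he]; exact abs_add_le _ _
        _ = |(m:ℝ) * α - p| + (m:ℝ) * Real.sqrt 5 := by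
              rw [abs_mul, hba, abs_of_nonneg (by positivity : (0:ℝ) ≤ (m:ℝ))]
        _ ≤ 4 * m := by nlinarith
    have habs0 : 0 ≤ |(m:ℝ) * α - p| := abs_nonneg _
    rw [div_le_iff₀ (by positivity)]
    nlinarith [h1, hβb, habs0]

lemma golden_sin (m : ℕ) (hm : 1 ≤ m) :
    1 / (2 * m) ≤ |Real.sin (Real.pi * m * ((Real.sqrt 5 - 1) / 2))| := by
  have hm' : (1:ℝ) ≤ (m:ℝ) := by exact_mod_cast hm
  set α : ℝ := (Real.sqrt 5 - 1) / 2 with hαdef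
  set x : ℝ := (m:ℝ) * α with hx
  set p : ℤ := round x with hp
  set t : ℝ := x - p with htdef
  have ht2 : |t| ≤ 1/2 := abs_sub_round x
  have hlo : 1 / (4 * m) ≤ |t| := golden_dio m hm p
  -- reduce sin(π x) to sin(π t)
  have hπx : Real.pi * x = Real.pi * t + p * Real.pi := by rw [htdef]; ring
  have hsin_eq : |Real.sin (Real.pi * x)| = |Real.sin (Real.pi * t)| := by
    rw [hπx, Real.sin_add_int_mul_pi, abs_mul]
    have : |((-1:ℝ)) ^ p| = 1 := by
      rcases Int.even_or_odd p with h | h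
      · rw [h.neg_one_zpow]; simp
      · rw [h.neg_one_zpow]; simp
    rw [this, one_mul]
  -- lower bound for |sin(π t)|
  have key : ∀ u : ℝ, 0 ≤ u → u ≤ 1/2 → 2 * u ≤ Real.sin (Real.pi * u) := by
    intro u h0 h1
    have hpi := Real.pi_pos
    have h := Real.mul_le_sin (x := Real.pi * u) (by positivity) (by nlinarith)
    have heq : 2 / Real.pi * (Real.pi * u) = 2 * u := by field_simp
    linarith [heq ▸ h]
  have habs : 2 * |t| ≤ |Real.sin (Real.pi * t)| := by
    rcases le_or_gt 0 t with h | h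
    · rw [abs_of_nonneg h]
      exact le_trans (key t h (by rwa [abs_of_nonneg h] at ht2)) (le_abs_self _)
    · rw [abs_of_neg h]
      have := key (-t) (by linarith) (by rwa [abs_of_neg h] at ht2)
      calc 2 * -t ≤ Real.sin (Real.pi * -t) := this
        _ = -Real.sin (Real.pi * t) := by rw [show Real.pi * -t = -(Real.pi * t) by ring, Real.sin_neg]
        _ ≤ |Real.sin (Real.pi * t)| := neg_le_abs _
  have : Real.pi * (m:ℝ) * α = Real.pi * x := by rw [hx]; ring
  rw [this, hsin_eq]
  calc 1 / (2 * (m:ℝ)) = 2 * (1 / (4 * m)) := by ring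
    _ ≤ 2 * |t| := by linarith
    _ ≤ _ := habs

lemma golden_exp_lb (m : ℕ) (hm : 1 ≤ m) :
    1 / (m:ℝ) ≤ ‖1 - Complex.exp (((2 * Real.pi * m * ((Real.sqrt 5 - 1) / 2) : ℝ) : ℂ) * Complex.I)‖ := by
  have hm' : (1:ℝ) ≤ (m:ℝ) := by exact_mod_cast hm
  set α : ℝ := (Real.sqrt 5 - 1) / 2 with hαdef
  set θ : ℝ := 2 * Real.pi * m * α with hθ
  have h2 : ‖1 - Complex.exp ((θ:ℂ) * Complex.I)‖ ^ 2
      = (1 - Real.cos θ)^2 + Real.sin θ^2 := by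
    rw [Complex.sq_norm, Complex.normSq_apply]
    simp [Complex.exp_ofReal_mul_I_re, Complex.exp_ofReal_mul_I_im]
    ring
  have hcos : Real.cos θ = 1 - 2 * Real.sin (Real.pi * m * α)^2 := by
    have hh : θ = 2 * (Real.pi * m * α) := by rw [hθ]; ring
    rw [hh, Real.cos_two_mul]
    have := Real.sin_sq_add_cos_sq (Real.pi * m * α)
    linarith
  have h3 : ‖1 - Complex.exp ((θ:ℂ) * Complex.I)‖ ^ 2
      = 4 * Real.sin (Real.pi * m * α)^2 := by
    rw [h2]
    have := Real.sin_sq_add_cos_sq θ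
    nlinarith [hcos]
  have hsin := golden_sin m hm
  rw [← hαdef] at hsin
  have h4 : (1 / (2 * (m:ℝ)))^2 ≤ Real.sin (Real.pi * m * α)^2 := by
    rw [← sq_abs (Real.sin _)]
    exact pow_le_pow_left₀ (by positivity) hsin 2
  have habs0 : 0 ≤ ‖1 - Complex.exp ((θ:ℂ) * Complex.I)‖ := norm_nonneg _
  have hmpos : (0:ℝ) < (m:ℝ) := by positivity
  have hs1 : 1 ≤ |Real.sin (Real.pi * m * α)| * (2 * m) := by
    rw [div_le_iff₀ (by positivity : (0:ℝ) < 2 * m)] at hsin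
    linarith [hsin]
  have h7 : 1 ≤ (‖1 - Complex.exp ((θ:ℂ) * Complex.I)‖ * m)^2 := by
    have he : (‖1 - Complex.exp ((θ:ℂ) * Complex.I)‖ * m)^2
        = (|Real.sin (Real.pi * m * α)| * (2 * m))^2 := by
      rw [mul_pow, h3, mul_pow, sq_abs]; ring
    rw [he]
    nlinarith [hs1]
  rw [div_le_iff₀ hmpos]
  nlinarith [h7, mul_nonneg habs0 hmpos.le]

/-- For the golden mean `α = (√5 - 1)/2` and `0 < r < 1`, the Birkhoff sums
`∑_{k=1}^{n} log |1 - r e^{2πi k α}|` are uniformly bounded in `n`. -/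
theorem birkhoff_sum_subcritical_bounded (α : ℝ) (hα : α = (Real.sqrt 5 - 1) / 2)
    (r : ℝ) (hr0 : 0 < r) (hr1 : r < 1) :
    ∃ C > 0, ∀ n : ℕ, 1 ≤ n →
      |∑ k ∈ Finset.Icc 1 n,
        Real.log (‖1 - (r : ℂ) * Complex.exp (2 * Real.pi * Complex.I * k * α)‖)| ≤ C := by
  refine ⟨2 * (1 - r)⁻¹, mul_pos two_pos (inv_pos.mpr (by linarith)), fun n _ => ?_⟩
  set z : ℂ := Complex.exp (2 * Real.pi * Complex.I * α) with hz
  have hzk : ∀ k : ℕ, Complex.exp (2 * (Real.pi:ℂ) * Complex.I * (k:ℂ) * (α:ℂ)) = z ^ k := by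
    intro k
    rw [hz, ← Complex.exp_nat_mul]
    congr 1
    ring
  have hz2 : ∀ M : ℕ, z ^ M = Complex.exp (((2 * Real.pi * M * α : ℝ) : ℂ) * Complex.I) := by
    intro M
    rw [hz, ← Complex.exp_nat_mul]
    congr 1
    push_cast
    ring
  have hzabs : ∀ M : ℕ, ‖z ^ M‖ = 1 := by
    intro M
    rw [hz2 M]
    exact Complex.norm_exp_ofReal_mul_I _
  have hlb : ∀ M : ℕ, 1 ≤ M → 1 / (M:ℝ) ≤ ‖1 - z ^ M‖ := by
    intro M hM
    rw [hz2 M, hα]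
    exact golden_exp_lb M hM
  have hwnorm : ∀ k : ℕ, ‖(r:ℂ) * z ^ k‖ = r := by
    intro k
    rw [norm_mul, Complex.norm_real, Real.norm_eq_abs,
      abs_of_pos hr0, hzabs k, mul_one]
  have hlog : ∀ k : ℕ, HasSum (fun m : ℕ => ((r:ℂ) * z ^ k) ^ m / m)
      (-Complex.log (1 - (r:ℂ) * z ^ k)) := by
    intro k
    exact Complex.hasSum_taylorSeries_neg_log (by rw [hwnorm k]; exact hr1)
  have hsum : HasSum (fun m : ℕ => ∑ k ∈ Finset.Icc 1 n, ((r:ℂ) * z ^ k) ^ m / m)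
      (∑ k ∈ Finset.Icc 1 n, -Complex.log (1 - (r:ℂ) * z ^ k)) :=
    hasSum_sum fun k _ => hlog k
  have hbound : ∀ m : ℕ, ‖∑ k ∈ Finset.Icc 1 n, ((r:ℂ) * z ^ k) ^ m / m‖ ≤ 2 * r ^ m := by
    intro m
    rcases Nat.eq_zero_or_pos m with rfl | hm
    · simp
    have hmpos : (0:ℝ) < m := by exact_mod_cast hm
    have hζ1 : 1 / (m:ℝ) ≤ ‖1 - z ^ m‖ := hlb m hm
    have hζne : z ^ m ≠ 1 := by
      intro h
      rw [h] at hζ1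
      simp at hζ1
      nlinarith
    have hterm : ∀ k : ℕ, ((r:ℂ) * z ^ k) ^ m / m = ((r:ℂ) ^ m / m) * (z ^ m) ^ k := by
      intro k
      have hp : (z ^ k) ^ m = (z ^ m) ^ k := by
        rw [← pow_mul, ← pow_mul, Nat.mul_comm]
      rw [mul_pow, hp]
      ring
    rw [Finset.sum_congr rfl fun k _ => hterm k, ← Finset.mul_sum, norm_mul]
    have hgeom : ‖∑ k ∈ Finset.Icc 1 n, (z ^ m) ^ k‖ ≤ 2 * m := by
      have hIcc : ∑ k ∈ Finset.Icc 1 n, (z ^ m) ^ k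
          = (z ^ m) * ∑ i ∈ Finset.range n, (z ^ m) ^ i := by
        rw [← Finset.Ico_add_one_right_eq_Icc, Finset.sum_Ico_eq_sum_range, Finset.mul_sum]
        exact Finset.sum_congr (by norm_num) fun i _ => by rw [pow_add, pow_one]
      rw [hIcc, geom_sum_eq hζne n, norm_mul, norm_div]
      have h1 : ‖z ^ m‖ = 1 := by exact hzabs m
      have h2 : ‖(z ^ m) ^ n - 1‖ ≤ 2 := by
        calc ‖(z ^ m) ^ n - 1‖ ≤ ‖(z ^ m) ^ n‖ + ‖(1:ℂ)‖ := norm_sub_le _ _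
          _ = 2 := by rw [norm_pow, h1]; norm_num
      have h3 : ‖z ^ m - 1‖ = ‖1 - z ^ m‖ := by
        rw [← norm_neg, neg_sub]
      have h4 : (1:ℝ) / m ≤ ‖z ^ m - 1‖ := by rw [h3]; exact hζ1
      have h5 : ‖(z ^ m) ^ n - 1‖ / ‖z ^ m - 1‖ ≤ 2 * m := by
        rw [div_le_iff₀ (lt_of_lt_of_le (by positivity) h4)]
        calc ‖(z ^ m) ^ n - 1‖ ≤ 2 := h2
          _ = 2 * m * (1 / m) := by field_simp
          _ ≤ 2 * m * ‖z ^ m - 1‖ := by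
              exact mul_le_mul_of_nonneg_left h4 (by positivity)
      calc ‖z ^ m‖ * (‖(z ^ m) ^ n - 1‖ / ‖z ^ m - 1‖) ≤ 1 * (2 * m) := by
            rw [h1]; simpa using h5
        _ = 2 * m := one_mul _
    have hnorm1 : ‖(r:ℂ) ^ m / (m:ℂ)‖ = r ^ m / m := by
      rw [norm_div, norm_pow, Complex.norm_real, Real.norm_eq_abs, abs_of_pos hr0,
        Complex.norm_natCast]
    rw [hnorm1]
    calc r ^ m / m * ‖∑ k ∈ Finset.Icc 1 n, (z ^ m) ^ k‖ ≤ r ^ m / m * (2 * m) := by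
          exact mul_le_mul_of_nonneg_left hgeom (by positivity)
      _ = 2 * r ^ m := by field_simp
  have hgeo : HasSum (fun m : ℕ => 2 * r ^ m) (2 * (1 - r)⁻¹) :=
    (hasSum_geometric_of_lt_one hr0.le hr1).mul_left 2
  have hnormS : ‖∑ k ∈ Finset.Icc 1 n, -Complex.log (1 - (r:ℂ) * z ^ k)‖ ≤ 2 * (1 - r)⁻¹ := by
    rw [← hsum.tsum_eq]
    exact tsum_of_norm_bounded hgeo hbound
  have hre : ∑ k ∈ Finset.Icc 1 n,
        Real.log (‖1 - (r : ℂ) * Complex.exp (2 * Real.pi * Complex.I * k * α)‖)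
      = (∑ k ∈ Finset.Icc 1 n, Complex.log (1 - (r:ℂ) * z ^ k)).re := by
    rw [Complex.re_sum]
    refine Finset.sum_congr rfl fun k _ => ?_
    rw [Complex.log_re, hzk k]
  rw [hre]
  calc |(∑ k ∈ Finset.Icc 1 n, Complex.log (1 - (r:ℂ) * z ^ k)).re|
      ≤ ‖∑ k ∈ Finset.Icc 1 n, Complex.log (1 - (r:ℂ) * z ^ k)‖ :=
        Complex.abs_re_le_norm _
    _ = ‖∑ k ∈ Finset.Icc 1 n, -Complex.log (1 - (r:ℂ) * z ^ k)‖ := by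
        rw [Finset.sum_neg_distrib, norm_neg]
    _ ≤ 2 * (1 - r)⁻¹ := hnormS
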